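/- Let G and H be maximally almost periodic Hausdorff abelian topological groups, each with the Schur property (a sequence converges in the group iff it converges in the topology induced by all continuous characters). Then the group Z = CHom_p(G, H) of continuous homomorphisms from G to H with the topology of pointwise convergence also has the Schur property. -/

import Mathlib

/-- A continuous character of an abelian topological group, as a `ℂ`-valued function. -/
def IsChar {K : Type*} [AddCommGroup K] [TopologicalSpace K] (χ : K → ℂ) : Prop :=
  Continuous χ ∧ (∀ x y, χ (x + y) = χ x * χ y) ∧ ∀ x, ‖χ x‖ = 1

/-- A group is maximally almost periodic if its continuous characters separate points. -/
def MAPGroup (K : Type*) [AddCommGroup K] [TopologicalSpace K] : Prop :=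
  ∀ g : K, g ≠ 0 → ∃ χ : K → ℂ, IsChar χ ∧ χ g ≠ 1

/-- The Schur property: a sequence converges iff it converges under every continuous
character, i.e. in the topology induced by all continuous characters. -/
def SchurProperty (K : Type*) [AddCommGroup K] [TopologicalSpace K] : Prop :=
  ∀ (u : ℕ → K) (k : K),
    Filter.Tendsto u Filter.atTop (nhds k) ↔
      ∀ χ : K → ℂ, IsChar χ → Filter.Tendsto (fun n => χ (u n)) Filter.atTop (nhds (χ k))

/-- The group of continuous homomorphisms `G → H` with the pointwise topology. -/
def CHomP (G H : Type*) [AddCommGroup G] [AddCommGroup H] [TopologicalSpace G]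
    [TopologicalSpace H] : Type _ :=
  {φ : G → H // Continuous φ ∧ ∀ x y, φ (x + y) = φ x + φ y}

section
variable (G H : Type*) [AddCommGroup G] [AddCommGroup H] [TopologicalSpace G]
  [TopologicalSpace H] [IsTopologicalAddGroup H]

instance : TopologicalSpace (CHomP G H) := instTopologicalSpaceSubtype

instance : Zero (CHomP G H) :=
  ⟨⟨fun _ => 0, continuous_const, by intro x y; simp⟩⟩

instance : Add (CHomP G H) :=
  ⟨fun φ ψ => ⟨fun x => φ.1 x + ψ.1 x, φ.2.1.add ψ.2.1, by
    intro x y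
    show φ.1 (x + y) + ψ.1 (x + y) = _
    rw [φ.2.2 x y, ψ.2.2 x y]; exact add_add_add_comm _ _ _ _⟩⟩

instance : Neg (CHomP G H) :=
  ⟨fun φ => ⟨fun x => -(φ.1 x), φ.2.1.neg, by
    intro x y
    show -(φ.1 (x + y)) = _
    rw [φ.2.2 x y]; abel⟩⟩

instance : AddCommGroup (CHomP G H) where
  add_assoc a b c := Subtype.ext (funext fun x => add_assoc _ _ _)
  zero_add a := Subtype.ext (funext fun x => zero_add _)
  add_zero a := Subtype.ext (funext fun x => add_zero _)
  neg_add_cancel a := Subtype.ext (funext fun x => neg_add_cancel _)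
  add_comm a b := Subtype.ext (funext fun x => add_comm _ _)
  nsmul := nsmulRec
  zsmul := zsmulRec

end

/-- If `G` and `H` are maximally almost periodic abelian topological groups with the Schur
property, then the group `CHom_p(G, H)` of continuous homomorphisms with the pointwise
topology also has the Schur property. -/
theorem stmt18 {G H : Type*} [AddCommGroup G] [AddCommGroup H] [TopologicalSpace G]
    [TopologicalSpace H] [IsTopologicalAddGroup G] [IsTopologicalAddGroup H]
    (hG : MAPGroup G) (hH : MAPGroup H)
    (hSG : SchurProperty G) (hSH : SchurProperty H) :
    SchurProperty (CHomP G H) := by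
  intro u k
  constructor
  · intro h χ hχ
    exact (hχ.1.tendsto k).comp h
  · intro h
    refine (tendsto_subtype_rng (p := fun φ : G → H => Continuous φ ∧ ∀ x y, φ (x + y) = φ x + φ y) (f := u) (x := k)).2 ?_
    rw [tendsto_pi_nhds]
    intro g
    rw [hSH]
    intro Φ hΦ
    have hc : IsChar (fun ψ : CHomP G H => Φ (ψ.1 g)) := by
      refine ⟨hΦ.1.comp ((continuous_apply g).comp continuous_subtype_val), ?_, fun x => hΦ.2.2 _⟩
      intro x y
      show Φ (x.1 g + y.1 g) = _
      exact hΦ.2.1 _ _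
    exact h _ hc
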